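/- Let (b₁,b₂) ∈ B with b₃ = (b₁b₂)^(−1), and assume b₁ ≥ b₂ + 2b₃ and G(b₁,b₂,b₃) > 0 (so (b₁,b₂) lies in B_{III}, the existence region of the type-III Riemann ellipsoids). Then (x²−y²)·D(x,y,z) ≠ 0 both for (x,y,z) = (b₁,b₂,b₃) and for (x,y,z) = (b₂,b₁,b₃), and the four numbers G^R₊(b₁,b₂,b₃), G^R₋(b₁,b₂,b₃), G^R₊(b₂,b₁,b₃), G^R₋(b₂,b₁,b₃) are all nonnegative; consequently the quantities N^R₊(x,y,z) = ½(√(G^R₊(x,y,z)) + √(G^R₋(x,y,z))) and N^R₋(x,y,z) = ½(√(G^R₊(x,y,z)) − √(G^R₋(x,y,z))), which define the momenta of the type-III ellipsoids, are well-defined real numbers at both argument triples. -/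
import Mathlib


open Real MeasureTheory

/-- `C₁(x,y,z) = 2πg ∫₀^∞ s·((s+x²)(s+y²)(s+z²))^(−3/2) ds`. -/
noncomputable def riC1 (g x y z : ℝ) : ℝ :=
  2 * π * g * ∫ s in Set.Ioi (0:ℝ),
    s * ((s + x ^ 2) * (s + y ^ 2) * (s + z ^ 2)) ^ (-(3:ℝ)/2)

/-- `C₂(x,y,z) = 2πg ∫₀^∞ s²·((s+x²)(s+y²)(s+z²))^(−3/2) ds`. -/
noncomputable def riC2 (g x y z : ℝ) : ℝ :=
  2 * π * g * ∫ s in Set.Ioi (0:ℝ),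
    s ^ 2 * ((s + x ^ 2) * (s + y ^ 2) * (s + z ^ 2)) ^ (-(3:ℝ)/2)

/-- `G(x,y,z) = x²(y²−z²)C₁ + (y²−4z²)(z²C₁ + C₂)`. -/
noncomputable def Gfun (g x y z : ℝ) : ℝ :=
  x ^ 2 * (y ^ 2 - z ^ 2) * riC1 g x y z
    + (y ^ 2 - 4 * z ^ 2) * (z ^ 2 * riC1 g x y z + riC2 g x y z)

/-- `D(x,y,z) = x²(y²−z²) + z²(4z²−y²)`. -/
def Dfun (x y z : ℝ) : ℝ := x ^ 2 * (y ^ 2 - z ^ 2) + z ^ 2 * (4 * z ^ 2 - y ^ 2)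

/-- `G^R₊(x,y,z)`. -/
noncomputable def GRp (g x y z : ℝ) : ℝ :=
  (y - z) ^ 4 * (x ^ 2 - (y + 2 * z) ^ 2) *
    ((x ^ 2 - z ^ 2) * Gfun g x y z) / ((x ^ 2 - y ^ 2) * Dfun x y z)

/-- `G^R₋(x,y,z)`. -/
noncomputable def GRm (g x y z : ℝ) : ℝ :=
  (y + z) ^ 4 * (x ^ 2 - (y - 2 * z) ^ 2) *
    ((x ^ 2 - z ^ 2) * Gfun g x y z) / ((x ^ 2 - y ^ 2) * Dfun x y z)

/-- `N^R₊(x,y,z) = ½(√G^R₊ + √G^R₋)`. -/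
noncomputable def NRp (g x y z : ℝ) : ℝ :=
  (Real.sqrt (GRp g x y z) + Real.sqrt (GRm g x y z)) / 2

/-- `N^R₋(x,y,z) = ½(√G^R₊ − √G^R₋)`. -/
noncomputable def NRm (g x y z : ℝ) : ℝ :=
  (Real.sqrt (GRp g x y z) - Real.sqrt (GRm g x y z)) / 2

/-- Membership in `B = {(b₁,b₂) : b₁ > b₂ > b₁^(−1/2) > 0}`. -/
def memB (b1 b2 : ℝ) : Prop := b2 < b1 ∧ (Real.sqrt b1)⁻¹ < b2 ∧ 0 < (Real.sqrt b1)⁻¹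

lemma riC1_nonneg (g x y z : ℝ) (hg : 0 ≤ g) : 0 ≤ riC1 g x y z := by
  unfold riC1
  have h : 0 ≤ ∫ s in Set.Ioi (0:ℝ),
      s * ((s + x ^ 2) * (s + y ^ 2) * (s + z ^ 2)) ^ (-(3:ℝ)/2) := by
    apply MeasureTheory.setIntegral_nonneg measurableSet_Ioi
    intro s hs
    have hs0 : (0:ℝ) ≤ s := le_of_lt hs
    have : (0:ℝ) ≤ (s + x ^ 2) * (s + y ^ 2) * (s + z ^ 2) := by positivity
    exact mul_nonneg hs0 (Real.rpow_nonneg this _)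
  exact mul_nonneg (mul_nonneg (by positivity) hg) h

lemma riC2_nonneg (g x y z : ℝ) (hg : 0 ≤ g) : 0 ≤ riC2 g x y z := by
  unfold riC2
  have h : 0 ≤ ∫ s in Set.Ioi (0:ℝ),
      s ^ 2 * ((s + x ^ 2) * (s + y ^ 2) * (s + z ^ 2)) ^ (-(3:ℝ)/2) := by
    apply MeasureTheory.setIntegral_nonneg measurableSet_Ioi
    intro s hs
    have hs0 : (0:ℝ) ≤ s := le_of_lt hs
    have : (0:ℝ) ≤ (s + x ^ 2) * (s + y ^ 2) * (s + z ^ 2) := by positivity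
    exact mul_nonneg (sq_nonneg s) (Real.rpow_nonneg this _)
  exact mul_nonneg (mul_nonneg (by positivity) hg) h

/-- On the existence region `B_{III}` (`b₁ ≥ b₂ + 2b₃` and
`G(b₁,b₂,b₃) > 0`), the denominators `(x²−y²)D(x,y,z)` are nonzero and `G^R₊`, `G^R₋` are
nonnegative at the triples `(b₁,b₂,b₃)` and `(b₂,b₁,b₃)`, so the momenta `N^R±` of the
type-III ellipsoids are well defined. -/
theorem stmt_12 (g b1 b2 b3 : ℝ) (hg : 0 < g) (hB : memB b1 b2) (hb3 : b3 = (b1 * b2)⁻¹)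
    (hIII : b2 + 2 * b3 ≤ b1) (hG : 0 < Gfun g b1 b2 b3) :
    (b1 ^ 2 - b2 ^ 2) * Dfun b1 b2 b3 ≠ 0 ∧
    (b2 ^ 2 - b1 ^ 2) * Dfun b2 b1 b3 ≠ 0 ∧
    0 ≤ GRp g b1 b2 b3 ∧ 0 ≤ GRm g b1 b2 b3 ∧
    0 ≤ GRp g b2 b1 b3 ∧ 0 ≤ GRm g b2 b1 b3 ∧
    Real.sqrt (GRp g b1 b2 b3) ^ 2 = GRp g b1 b2 b3 ∧
    Real.sqrt (GRm g b1 b2 b3) ^ 2 = GRm g b1 b2 b3 ∧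
    Real.sqrt (GRp g b2 b1 b3) ^ 2 = GRp g b2 b1 b3 ∧
    Real.sqrt (GRm g b2 b1 b3) ^ 2 = GRm g b2 b1 b3 := by
  obtain ⟨hb21, hsb, hspos⟩ := hB
  have hsqrt : 0 < Real.sqrt b1 := by
    by_contra h
    push_neg at h
    rw [inv_eq_zero.mpr (le_antisymm h (Real.sqrt_nonneg b1))] at hspos
    exact lt_irrefl 0 hspos
  have hb1 : 0 < b1 := by
    by_contra h
    push_neg at h
    rw [Real.sqrt_eq_zero'.mpr h] at hsqrt
    exact lt_irrefl 0 hsqrt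
  have hb2 : 0 < b2 := lt_trans hspos hsb
  have hb3pos : 0 < b3 := by rw [hb3]; positivity
  have hkey : 1 < b1 * b2 ^ 2 := by
    have h1 : 1 < b2 * Real.sqrt b1 := by
      rw [← inv_mul_cancel₀ (ne_of_gt hsqrt)]
      exact mul_lt_mul_of_pos_right hsb hsqrt
    have h2 : (b2 * Real.sqrt b1) ^ 2 = b2 ^ 2 * b1 := by
      rw [mul_pow, Real.sq_sqrt (le_of_lt hb1)]
    nlinarith [h1, h2]
  have hb32 : b3 < b2 := by
    rw [hb3]
    rw [inv_lt_iff_one_lt_mul₀ (by positivity)]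
    nlinarith
  have hb31 : b3 < b1 := lt_trans hb32 hb21
  -- D values
  have hDval : Dfun b1 b2 b3 = (b1 ^ 2 - b3 ^ 2) * (b2 ^ 2 - b3 ^ 2) + 3 * b3 ^ 4 := by
    unfold Dfun; ring
  have hDval' : Dfun b2 b1 b3 = (b1 ^ 2 - b3 ^ 2) * (b2 ^ 2 - b3 ^ 2) + 3 * b3 ^ 4 := by
    unfold Dfun; ring
  have he1 : (0:ℝ) < b1 ^ 2 - b3 ^ 2 := by nlinarith
  have he2 : (0:ℝ) < b2 ^ 2 - b3 ^ 2 := by nlinarith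
  have he12 := mul_pos he1 he2
  have he4 : (0:ℝ) < b3 ^ 4 := by positivity
  have hD : 0 < Dfun b1 b2 b3 := by rw [hDval]; nlinarith
  have hD' : 0 < Dfun b2 b1 b3 := by rw [hDval']; nlinarith
  have hd1 : 0 < (b1 ^ 2 - b2 ^ 2) * Dfun b1 b2 b3 := by
    apply mul_pos _ hD; nlinarith
  have hd2 : (b2 ^ 2 - b1 ^ 2) * Dfun b2 b1 b3 < 0 := by
    apply mul_neg_of_neg_of_pos _ hD'; nlinarith
  -- nonnegativity of swapped G
  have hC1 : 0 ≤ riC1 g b2 b1 b3 := riC1_nonneg g b2 b1 b3 (le_of_lt hg)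
  have hC2 : 0 ≤ riC2 g b2 b1 b3 := riC2_nonneg g b2 b1 b3 (le_of_lt hg)
  have hGswap : 0 ≤ Gfun g b2 b1 b3 := by
    unfold Gfun
    have h1 : (0:ℝ) ≤ b2 ^ 2 * (b1 ^ 2 - b3 ^ 2) := mul_nonneg (sq_nonneg b2) (le_of_lt he1)
    have h2 : (0:ℝ) ≤ b1 ^ 2 - 4 * b3 ^ 2 := by nlinarith
    have h3 : (0:ℝ) ≤ b3 ^ 2 * riC1 g b2 b1 b3 + riC2 g b2 b1 b3 :=
      add_nonneg (mul_nonneg (sq_nonneg b3) hC1) hC2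
    exact add_nonneg (mul_nonneg h1 hC1) (mul_nonneg h2 h3)
  -- factor signs
  have hf1 : (0:ℝ) ≤ b1 ^ 2 - (b2 + 2 * b3) ^ 2 :=
    sub_nonneg.mpr (pow_le_pow_left₀ (by linarith) hIII 2)
  have hf2 : (0:ℝ) ≤ b1 ^ 2 - (b2 - 2 * b3) ^ 2 :=
    sub_nonneg.mpr (sq_le_sq' (by linarith) (by linarith))
  have hf3 : b2 ^ 2 - (b1 + 2 * b3) ^ 2 ≤ 0 :=
    sub_nonpos.mpr (pow_le_pow_left₀ (le_of_lt hb2) (by linarith) 2)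
  have hf4 : b2 ^ 2 - (b1 - 2 * b3) ^ 2 ≤ 0 :=
    sub_nonpos.mpr (pow_le_pow_left₀ (le_of_lt hb2) (by linarith) 2)
  have hxz : (0:ℝ) ≤ b1 ^ 2 - b3 ^ 2 := le_of_lt he1
  have hxz' : (0:ℝ) ≤ b2 ^ 2 - b3 ^ 2 := le_of_lt he2
  have hGRp1 : 0 ≤ GRp g b1 b2 b3 := by
    unfold GRp
    apply div_nonneg _ (le_of_lt hd1)
    exact mul_nonneg (mul_nonneg (by positivity) hf1) (mul_nonneg hxz (le_of_lt hG))
  have hGRm1 : 0 ≤ GRm g b1 b2 b3 := by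
    unfold GRm
    apply div_nonneg _ (le_of_lt hd1)
    exact mul_nonneg (mul_nonneg (by positivity) hf2) (mul_nonneg hxz (le_of_lt hG))
  have hGRp2 : 0 ≤ GRp g b2 b1 b3 := by
    unfold GRp
    refine div_nonneg_iff.mpr (Or.inr ⟨?_, le_of_lt hd2⟩)
    apply mul_nonpos_of_nonpos_of_nonneg
    · exact mul_nonpos_of_nonneg_of_nonpos (by positivity : (0:ℝ) ≤ (b1 - b3) ^ 4) hf3
    · exact mul_nonneg hxz' hGswap
  have hGRm2 : 0 ≤ GRm g b2 b1 b3 := by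
    unfold GRm
    refine div_nonneg_iff.mpr (Or.inr ⟨?_, le_of_lt hd2⟩)
    apply mul_nonpos_of_nonpos_of_nonneg
    · exact mul_nonpos_of_nonneg_of_nonpos (by positivity : (0:ℝ) ≤ (b1 + b3) ^ 4) hf4
    · exact mul_nonneg hxz' hGswap
  exact ⟨ne_of_gt hd1, ne_of_lt hd2, hGRp1, hGRm1, hGRp2, hGRm2,
    Real.sq_sqrt hGRp1, Real.sq_sqrt hGRm1, Real.sq_sqrt hGRp2, Real.sq_sqrt hGRm2⟩
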